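/- There exists a constant $C > 0$ such that for all $\lambda > 1$, $0 < r \le 1/4$ with $\lambda r < \lambda^{-1}$, and all integers $n$: the $L^{2,1}$ norm of $z \mapsto z^n$ on the annulus $B_{\lambda^{-1}} \setminus B_{\lambda r} \subset \mathbb{C}$ satisfies $\|z^n\|_{L^{2,1}(B_{\lambda^{-1}} \setminus B_{\lambda r})} \le C (\lambda r)^{n+1}$ if $n \le -2$, $\le C \lambda^{-(n+1)}$ if $n \ge 0$, and $\le C |\ln r|$ if $n = -1$. -/

import Mathlib

open MeasureTheory Metric Set ENNReal

/-- Lorentz `L^{2,1}` norm of a function on `U ⊆ ℂ`. -/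
noncomputable def lorentz21 (U : Set ℂ) (f : ℂ → ℂ) : ℝ≥0∞ :=
  ∫⁻ t in Set.Ioi (0 : ℝ), (volume {z : ℂ | z ∈ U ∧ t ≤ ‖f z‖}) ^ (1/2 : ℝ)

lemma sqrt_vol_le {S : Set ℂ} {R : ℝ} (hR : 0 ≤ R) (h : S ⊆ closedBall 0 R) :
    (volume S) ^ (1/2 : ℝ) ≤ ENNReal.ofReal (Real.sqrt Real.pi * R) := by
  have h1 : volume S ≤ ENNReal.ofReal (Real.pi * R ^ 2) := by
    refine (measure_mono h).trans ?_
    rw [Complex.volume_closedBall]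
    rw [← ENNReal.ofReal_pow hR, ← ENNReal.ofReal_coe_nnreal, ← ENNReal.ofReal_mul (by positivity)]
    rw [NNReal.coe_real_pi, mul_comm]
  calc (volume S) ^ (1/2:ℝ) ≤ (ENNReal.ofReal (Real.pi * R ^ 2)) ^ (1/2:ℝ) :=
        ENNReal.rpow_le_rpow h1 (by norm_num)
    _ = ENNReal.ofReal ((Real.pi * R ^ 2) ^ (1/2:ℝ)) :=
        ENNReal.ofReal_rpow_of_nonneg (by positivity) (by norm_num)
    _ = ENNReal.ofReal (Real.sqrt Real.pi * R) := by
        rw [← Real.sqrt_eq_rpow, Real.sqrt_mul Real.pi_pos.le, Real.sqrt_sq hR]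

lemma lorentz_le {U : Set ℂ} {f : ℂ → ℂ} {g : ℝ → ℝ≥0∞}
    (h : ∀ t ∈ Ioi (0:ℝ), (volume {z : ℂ | z ∈ U ∧ t ≤ ‖f z‖}) ^ (1/2 : ℝ) ≤ g t) :
    lorentz21 U f ≤ ∫⁻ t in Ioi (0:ℝ), g t :=
  lintegral_mono_ae ((ae_restrict_iff' measurableSet_Ioi).2 (ae_of_all _ h))

lemma lint_Ioc (M : ℝ) (φ : ℝ → ℝ≥0∞) :
    ∫⁻ t in Ioi (0:ℝ), (Ioc (0:ℝ) M).indicator φ t = ∫⁻ t in Ioc (0:ℝ) M, φ t := by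
  rw [lintegral_indicator measurableSet_Ioc φ, Measure.restrict_restrict measurableSet_Ioc,
    inter_eq_self_of_subset_left Ioc_subset_Ioi_self]

lemma lint_const (M c : ℝ) (hM : 0 ≤ M) :
    ∫⁻ t in Ioc (0:ℝ) M, ENNReal.ofReal c = ENNReal.ofReal (c * M) := by
  rw [setLIntegral_const, Real.volume_Ioc, sub_zero, ← ENNReal.ofReal_mul' hM]

lemma lint_rpow (M : ℝ) (hM : 0 ≤ M) (p : ℝ) (hp : -1 < p) :
    ∫⁻ t in Ioc (0:ℝ) M, ENNReal.ofReal (t ^ p) = ENNReal.ofReal (M ^ (p+1) / (p+1)) := by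
  have hint : IntegrableOn (fun t : ℝ => t ^ p) (Ioc 0 M) := by
    have := (intervalIntegral.intervalIntegrable_rpow' (a := 0) (b := M) hp)
    rwa [intervalIntegrable_iff, uIoc_of_le hM] at this
  rw [← ofReal_integral_eq_lintegral_ofReal hint
    (((ae_restrict_iff' measurableSet_Ioc).2 (ae_of_all _ fun t ht =>
      Real.rpow_nonneg ht.1.le p)))]
  congr 1
  rw [← intervalIntegral.integral_of_le hM, integral_rpow (Or.inl hp),
    Real.zero_rpow (by linarith), sub_zero]

lemma lint_inv (a b : ℝ) (ha : 0 < a) (hab : a ≤ b) :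
    ∫⁻ t in Ioc a b, ENNReal.ofReal t⁻¹ = ENNReal.ofReal (Real.log b - Real.log a) := by
  have hb : 0 < b := ha.trans_le hab
  have hmem : ∀ x ∈ Set.uIcc a b, x ≠ 0 := fun x hx =>
    (lt_of_lt_of_le ha (by rw [Set.uIcc_of_le hab] at hx; exact hx.1)).ne'
  have hint : IntegrableOn (fun t : ℝ => t⁻¹) (Ioc a b) := by
    have := intervalIntegral.intervalIntegrable_inv (μ := volume) hmem continuousOn_id
    rwa [intervalIntegrable_iff, uIoc_of_le hab] at this
  rw [← ofReal_integral_eq_lintegral_ofReal hint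
    (((ae_restrict_iff' measurableSet_Ioc).2 (ae_of_all _ fun t ht =>
      inv_nonneg.2 (ha.trans ht.1).le)))]
  congr 1
  rw [← intervalIntegral.integral_of_le hab, integral_inv (fun h => (hmem 0 h) rfl), Real.log_div hb.ne' ha.ne']

lemma lint_Ioc' {a b : ℝ} (ha : 0 ≤ a) (φ : ℝ → ℝ≥0∞) :
    ∫⁻ t in Ioi (0:ℝ), (Ioc a b).indicator φ t = ∫⁻ t in Ioc a b, φ t := by
  have hsub : Ioc a b ⊆ Ioi 0 := fun x hx => lt_of_le_of_lt ha hx.1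
  rw [lintegral_indicator measurableSet_Ioc φ, Measure.restrict_restrict measurableSet_Ioc,
    inter_eq_self_of_subset_left hsub]


lemma memA {lam r : ℝ} {z : ℂ} :
    z ∈ ball (0:ℂ) lam⁻¹ \ ball (0:ℂ) (lam*r) ↔ ‖z‖ < lam⁻¹ ∧ lam*r ≤ ‖z‖ := by
  simp [mem_diff, mem_ball_zero_iff, not_lt]

lemma incl_neg {lam r t : ℝ} {m : ℕ} (hm : 0 < m) (ha : 0 < lam*r) (ht : 0 < t) :
    {z : ℂ | z ∈ ball (0:ℂ) lam⁻¹ \ ball (0:ℂ) (lam*r) ∧ t ≤ ‖z ^ (-(m:ℤ))‖}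
      ⊆ closedBall (0:ℂ) (t⁻¹ ^ (1/(m:ℝ))) := by
  rintro z ⟨hzA, hzt⟩
  have hz0 : lam*r ≤ ‖z‖ := (memA.1 hzA).2
  have hzpos : 0 < ‖z‖ := ha.trans_le hz0
  have h1 : ‖z ^ (-(m:ℤ))‖ = (‖z‖^m)⁻¹ := by
    rw [norm_zpow, zpow_neg, zpow_natCast]
  rw [h1] at hzt
  have h2 : ‖z‖^m ≤ t⁻¹ := by
    have := inv_anti₀ ht hzt
    rwa [inv_inv] at this
  have h3 : ‖z‖ ≤ t⁻¹ ^ (1/(m:ℝ)) := by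
    calc ‖z‖ = ((‖z‖^m : ℝ)) ^ (1/(m:ℝ)) := by
          rw [← Real.rpow_natCast ‖z‖ m, ← Real.rpow_mul (norm_nonneg z), mul_one_div,
            div_self (Nat.cast_ne_zero.2 hm.ne'), Real.rpow_one]
      _ ≤ t⁻¹ ^ (1/(m:ℝ)) := Real.rpow_le_rpow (by positivity) h2 (by positivity)
  exact mem_closedBall_zero_iff.2 h3

lemma empty_neg {lam r t : ℝ} {m : ℕ} (ha : 0 < lam*r) (ht : ((lam*r)^m)⁻¹ < t) :
    {z : ℂ | z ∈ ball (0:ℂ) lam⁻¹ \ ball (0:ℂ) (lam*r) ∧ t ≤ ‖z ^ (-(m:ℤ))‖} = ∅ := by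
  ext z
  simp only [mem_setOf_eq, mem_empty_iff_false, iff_false, not_and]
  intro hzA hzt
  have hz0 : lam*r ≤ ‖z‖ := (memA.1 hzA).2
  have h1 : ‖z ^ (-(m:ℤ))‖ = (‖z‖^m)⁻¹ := by
    rw [norm_zpow, zpow_neg, zpow_natCast]
  have h2 : (‖z‖^m)⁻¹ ≤ ((lam*r)^m)⁻¹ :=
    inv_anti₀ (by positivity) (pow_le_pow_left₀ ha.le hz0 m)
  rw [h1] at hzt
  linarith

lemma empty_pos {lam r t : ℝ} {m : ℕ} (hlam : 0 < lam) (ht : lam⁻¹^m < t) :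
    {z : ℂ | z ∈ ball (0:ℂ) lam⁻¹ \ ball (0:ℂ) (lam*r) ∧ t ≤ ‖z ^ (m:ℤ)‖} = ∅ := by
  ext z
  simp only [mem_setOf_eq, mem_empty_iff_false, iff_false, not_and]
  intro hzA hzt
  have hz0 : ‖z‖ < lam⁻¹ := (memA.1 hzA).1
  have h1 : ‖z ^ (m:ℤ)‖ = ‖z‖^m := by rw [norm_zpow, zpow_natCast]
  have h2 : ‖z‖^m ≤ lam⁻¹^m := pow_le_pow_left₀ (norm_nonneg z) hz0.le m
  rw [h1] at hzt
  linarith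

lemma case_nonneg (lam r : ℝ) (m : ℕ) (hlam : 1 < lam) :
    lorentz21 (ball (0:ℂ) lam⁻¹ \ ball (0:ℂ) (lam*r)) (fun z => z ^ (m:ℤ))
      ≤ ENNReal.ofReal (Real.sqrt Real.pi * lam⁻¹ ^ (m+1)) := by
  have hl0 : 0 < lam := by linarith
  have hinv : 0 < lam⁻¹ := by positivity
  refine le_trans (lorentz_le (g := (Ioc (0:ℝ) (lam⁻¹^m)).indicator
      (fun _ => ENNReal.ofReal (Real.sqrt Real.pi * lam⁻¹))) ?_) ?_
  · intro t ht
    by_cases hle : t ≤ lam⁻¹^m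
    · rw [indicator_of_mem (show t ∈ Ioc (0:ℝ) (lam⁻¹^m) from ⟨ht, hle⟩)]
      refine sqrt_vol_le hinv.le ?_
      intro z hz
      exact mem_closedBall_zero_iff.2 (le_of_lt (memA.1 hz.1).1)
    · rw [empty_pos hl0 (not_le.1 hle), measure_empty,
        ENNReal.zero_rpow_of_pos (by norm_num)]
      exact zero_le
  · rw [lint_Ioc' le_rfl, lint_const _ _ (by positivity)]
    apply ENNReal.ofReal_le_ofReal
    rw [pow_succ]
    ring_nf
    exact le_rfl

lemma case_le_neg2 (lam r : ℝ) (m : ℕ) (hm : 2 ≤ m) (hlam : 1 < lam) (ha : 0 < lam*r) :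
    lorentz21 (ball (0:ℂ) lam⁻¹ \ ball (0:ℂ) (lam*r)) (fun z => z ^ (-(m:ℤ)))
      ≤ ENNReal.ofReal (2 * Real.sqrt Real.pi * (lam*r) ^ (-(m:ℤ)+1)) := by
  have hm0 : 0 < m := by omega
  have hmR : (2:ℝ) ≤ (m:ℝ) := by exact_mod_cast hm
  have hmne : (m:ℝ) ≠ 0 := by positivity
  set M : ℝ := ((lam*r)^m)⁻¹ with hM
  have hM0 : 0 ≤ M := by positivity
  have hp : (-1:ℝ) < -(1/(m:ℝ)) := by
    have : 1/(m:ℝ) ≤ 1/2 := by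
      apply one_div_le_one_div_of_le <;> linarith
    linarith
  refine le_trans (lorentz_le (g := (Ioc (0:ℝ) M).indicator
      (fun t => ENNReal.ofReal (Real.sqrt Real.pi * t ^ (-(1/(m:ℝ)))))) ?_) ?_
  · intro t ht
    have ht0 : (0:ℝ) < t := ht
    by_cases hle : t ≤ M
    · rw [indicator_of_mem (show t ∈ Ioc (0:ℝ) M from ⟨ht, hle⟩)]
      have := sqrt_vol_le (R := t⁻¹ ^ (1/(m:ℝ))) (by positivity) (incl_neg hm0 ha ht0)
      rwa [Real.inv_rpow ht0.le, ← Real.rpow_neg ht0.le, neg_div' (m:ℝ) 1, neg_div]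
        at this
    · rw [empty_neg ha (not_le.1 hle), measure_empty,
        ENNReal.zero_rpow_of_pos (by norm_num)]
      exact zero_le
  · rw [lint_Ioc' le_rfl]
    simp_rw [ENNReal.ofReal_mul (Real.sqrt_nonneg _)]
    rw [lintegral_const_mul' _ _ ENNReal.ofReal_ne_top, lint_rpow M hM0 _ hp,
      ← ENNReal.ofReal_mul (Real.sqrt_nonneg _)]
    apply ENNReal.ofReal_le_ofReal
    have hq : M ^ (-(1/(m:ℝ)) + 1) = (lam*r) ^ (-(m:ℤ)+1) := by
      rw [hM, ← Real.rpow_natCast (lam*r) m, ← Real.rpow_neg ha.le,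
        ← Real.rpow_mul ha.le, ← Real.rpow_intCast (lam*r) (-(m:ℤ)+1)]
      congr 1
      push_cast
      field_simp
      ring
    rw [hq]
    have hx : (0:ℝ) ≤ (lam*r) ^ (-(m:ℤ)+1) := by positivity
    have hq2 : (1/2:ℝ) ≤ -(1/(m:ℝ)) + 1 := by
      have : 1/(m:ℝ) ≤ 1/2 := by
        apply one_div_le_one_div_of_le <;> linarith
      linarith
    have hqpos : (0:ℝ) < -(1/(m:ℝ)) + 1 := by linarith
    have hdiv : (lam*r) ^ (-(m:ℤ)+1) / (-(1/(m:ℝ)) + 1) ≤ 2 * (lam*r) ^ (-(m:ℤ)+1) := by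
      rw [div_le_iff₀ hqpos]
      nlinarith
    calc Real.sqrt Real.pi * ((lam*r) ^ (-(m:ℤ)+1) / (-(1/(m:ℝ)) + 1))
        ≤ Real.sqrt Real.pi * (2 * (lam*r) ^ (-(m:ℤ)+1)) :=
          mul_le_mul_of_nonneg_left hdiv (Real.sqrt_nonneg _)
      _ = 2 * Real.sqrt Real.pi * (lam*r) ^ (-(m:ℤ)+1) := by ring

lemma case_neg1 (lam r : ℝ) (hlam : 1 < lam) (hr : 0 < r) (hr4 : r ≤ 1/4)
    (hlr : lam*r < lam⁻¹) :
    lorentz21 (ball (0:ℂ) lam⁻¹ \ ball (0:ℂ) (lam*r)) (fun z => z ^ (-1:ℤ))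
      ≤ ENNReal.ofReal (2 * Real.sqrt Real.pi * |Real.log r|) := by
  have hl0 : 0 < lam := by linarith
  have ha : 0 < lam*r := by positivity
  have hinv : 0 < lam⁻¹ := by positivity
  have hlt : lam < (lam*r)⁻¹ := by
    have := inv_strictAnti₀ ha hlr
    rwa [inv_inv] at this
  refine le_trans (lorentz_le (g := fun t =>
      (Ioc (0:ℝ) lam).indicator (fun _ => ENNReal.ofReal (Real.sqrt Real.pi * lam⁻¹)) t
      + (Ioc lam (lam*r)⁻¹).indicator
          (fun t => ENNReal.ofReal (Real.sqrt Real.pi * t⁻¹)) t) ?_) ?_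
  · intro t ht
    have ht0 : (0:ℝ) < t := ht
    rcases le_or_gt t lam with h1 | h1
    · refine le_trans ?_ le_self_add
      rw [indicator_of_mem (show t ∈ Ioc (0:ℝ) lam from ⟨ht0, h1⟩)]
      refine sqrt_vol_le hinv.le ?_
      intro z hz
      exact mem_closedBall_zero_iff.2 (le_of_lt (memA.1 hz.1).1)
    · rcases le_or_gt t (lam*r)⁻¹ with h2 | h2
      · refine le_trans ?_ le_add_self
        rw [indicator_of_mem (show t ∈ Ioc lam (lam*r)⁻¹ from ⟨h1, h2⟩)]
        have hsub := incl_neg (lam := lam) (r := r) (m := 1) one_pos ha ht0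
        simp only [Nat.cast_one, one_div_one, Real.rpow_one] at hsub
        exact sqrt_vol_le (by positivity) hsub
      · have hempty := empty_neg (lam := lam) (r := r) (m := 1) ha
          (by rwa [pow_one] : ((lam*r)^1)⁻¹ < t)
        rw [Nat.cast_one] at hempty
        rw [hempty, measure_empty, ENNReal.zero_rpow_of_pos (by norm_num)]
        exact zero_le
  · rw [lintegral_add_left (measurable_const.indicator measurableSet_Ioc),
      lint_Ioc' le_rfl, lint_Ioc' hl0.le, lint_const _ _ hl0.le]
    simp_rw [ENNReal.ofReal_mul (Real.sqrt_nonneg _)]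
    rw [lintegral_const_mul' _ _ ENNReal.ofReal_ne_top, lint_inv lam _ hl0 hlt.le,
      ← ENNReal.ofReal_mul (Real.sqrt_nonneg _),
      ← ENNReal.ofReal_add (by positivity) (mul_nonneg (Real.sqrt_nonneg _)
        (by linarith [Real.log_lt_log hl0 hlt]))]
    apply ENNReal.ofReal_le_ofReal
    have hll : 0 < Real.log lam := Real.log_pos hlam
    have habs : |Real.log r| = -Real.log r := abs_of_neg (Real.log_neg hr (by linarith))
    have hlog4 : Real.log r ≤ -1 := by
      have h4 : Real.log r ≤ Real.log (1/4) := Real.log_le_log hr hr4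
      have : (1:ℝ) ≤ Real.log 4 := by
        rw [Real.le_log_iff_exp_le (by norm_num)]
        calc Real.exp 1 ≤ 2.7182818286 := Real.exp_one_lt_d9.le
          _ ≤ 4 := by norm_num
      rw [show (1/4:ℝ) = 4⁻¹ by norm_num, Real.log_inv] at h4
      linarith
    have hloginv : Real.log (lam*r)⁻¹ = -(Real.log lam + Real.log r) := by
      rw [Real.log_inv, Real.log_mul hl0.ne' hr.ne']
    rw [habs, hloginv, mul_assoc, inv_mul_cancel₀ hl0.ne', mul_one]
    nlinarith [mul_nonneg (Real.sqrt_nonneg Real.pi)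
      (show (0:ℝ) ≤ -Real.log r - 1 + 2*Real.log lam by linarith)]

/-- `L^{2,1}` norms of the monomials `z^n` on the annulus `B_{λ⁻¹} \ B_{λr}`:
bounded by `C(λr)^{n+1}` for `n ≤ -2`, by `Cλ^{-(n+1)}` for `n ≥ 0`, and by
`C|ln r|` for `n = -1`. -/
theorem stmt5 :
    ∃ C : ℝ, 0 < C ∧ ∀ (lam r : ℝ) (n : ℤ), 1 < lam → 0 < r → r ≤ 1/4 → lam * r < lam⁻¹ →
      (n ≤ -2 →
        lorentz21 (ball (0:ℂ) lam⁻¹ \ ball (0:ℂ) (lam * r)) (fun z => z ^ n)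
          ≤ ENNReal.ofReal (C * (lam * r) ^ (n + 1))) ∧
      (0 ≤ n →
        lorentz21 (ball (0:ℂ) lam⁻¹ \ ball (0:ℂ) (lam * r)) (fun z => z ^ n)
          ≤ ENNReal.ofReal (C * lam ^ (-(n + 1)))) ∧
      (n = -1 →
        lorentz21 (ball (0:ℂ) lam⁻¹ \ ball (0:ℂ) (lam * r)) (fun z => z ^ n)
          ≤ ENNReal.ofReal (C * |Real.log r|)) := by
  refine ⟨2 * Real.sqrt Real.pi, by positivity, ?_⟩
  intro lam r n hlam hr hr4 hlr
  have hl0 : 0 < lam := by linarith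
  have ha : 0 < lam * r := by positivity
  refine ⟨?_, ?_, ?_⟩
  · intro hn
    have hm2 : 2 ≤ (-n).toNat := by omega
    have hnm : n = -(((-n).toNat : ℕ) : ℤ) := by omega
    rw [hnm]
    exact case_le_neg2 lam r _ hm2 hlam ha
  · intro hn
    lift n to ℕ using hn with m
    refine le_trans (case_nonneg lam r m hlam) (ENNReal.ofReal_le_ofReal ?_)
    have hz : lam ^ (-((m:ℤ)+1)) = lam⁻¹ ^ (m+1) := by
      have hc : ((m:ℤ)+1) = ((m+1 : ℕ) : ℤ) := by push_cast; ring
      rw [zpow_neg, hc, zpow_natCast, ← inv_pow]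
    rw [hz]
    nlinarith [Real.sqrt_nonneg Real.pi, pow_nonneg (by positivity : (0:ℝ) ≤ lam⁻¹) (m+1)]
  · intro hn
    subst hn
    exact case_neg1 lam r hlam hr hr4 hlr
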